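/- Let V be a finite measure space, let λ > 0, let T : V × V → ℝ be a non-negative measurable turning kernel satisfying ∫_V T(v,u) dv = 1 for every u ∈ V, and let K : V × V → ℝ be a non-negative bounded measurable delay kernel. Suppose p : ℝ × V → ℝ is bounded, measurable, continuously differentiable in t with bounded time derivative, and satisfies the delayed velocity-jump equation ∂p/∂t(t,v) = −λ p(t,v) + λ ∫_V T(v,u) p(t − K(v,u), u) du for all t ∈ ℝ and v ∈ V. Then the total mass M(t) = ∫_V p(t,v) dv + λ ∫_V ∫_V T(v,u) ( ∫_{t−K(v,u)}^{t} p(s,u) ds ) du dv is constant in t. -/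

import Mathlib

open Real MeasureTheory intervalIntegral

private lemma bdd_integrable {α : Type*} [MeasurableSpace α] {μ : Measure α} [IsFiniteMeasure μ]
    {f : α → ℝ} (hm : AEStronglyMeasurable f μ) {C : ℝ} (hb : ∀ x, |f x| ≤ C) :
    Integrable f μ :=
  Integrable.mono' (integrable_const C) hm
    (Filter.Eventually.of_forall (fun x => by simpa [Real.norm_eq_abs] using hb x))

private lemma bdd_intervalIntegrable {f : ℝ → ℝ}
    (hm : AEStronglyMeasurable f (volume : Measure ℝ)) {C : ℝ} (hb : ∀ x, |f x| ≤ C) (a b : ℝ) :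
    IntervalIntegrable f volume a b := by
  rw [intervalIntegrable_iff]
  haveI : IsFiniteMeasure ((volume : Measure ℝ).restrict (Set.uIoc a b)) := by
    constructor
    rw [Measure.restrict_apply_univ, Set.uIoc, Real.volume_Ioc]
    exact ENNReal.ofReal_lt_top
  exact bdd_integrable hm.restrict hb

set_option maxHeartbeats 1000000 in
/-- Conservation of mass for the spatially homogeneous velocity jump process with
finite turning delays: if `p` satisfies
`∂p/∂t(t,v) = −λ p(t,v) + λ ∫_V T(v,u) p(t − K(v,u), u) du`,
then the total mass (running particles plus particles currently turning)
`M(t) = ∫_V p(t,v) dv + λ ∫_V ∫_V T(v,u) (∫_{t−K(v,u)}^t p(s,u) ds) du dv`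
is constant in time. -/
theorem delay_velocity_jump_mass_conservation
    {V : Type*} [MeasurableSpace V] (μ : Measure V) [IsFiniteMeasure μ]
    (lam : ℝ) (hlam : 0 < lam)
    (T : V → V → ℝ)
    (hT_meas : Measurable (fun q : V × V => T q.1 q.2))
    (hT_nonneg : ∀ v u : V, 0 ≤ T v u)
    (hT_prob : ∀ u : V, ∫ v, T v u ∂μ = 1)
    (K : V → V → ℝ)
    (hK_meas : Measurable (fun q : V × V => K q.1 q.2))
    (hK_nonneg : ∀ v u : V, 0 ≤ K v u)
    (hK_bdd : ∃ CK : ℝ, ∀ v u : V, K v u ≤ CK)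
    (p p' : ℝ → V → ℝ)
    (hp_meas : Measurable (fun q : ℝ × V => p q.1 q.2))
    (hp_bdd : ∃ C : ℝ, ∀ (t : ℝ) (v : V), |p t v| ≤ C)
    (hp_deriv : ∀ (t : ℝ) (v : V), HasDerivAt (fun s => p s v) (p' t v) t)
    (hp'_cont : ∀ v : V, Continuous fun t => p' t v)
    (hp'_bdd : ∃ C' : ℝ, ∀ (t : ℝ) (v : V), |p' t v| ≤ C')
    (hpde : ∀ (t : ℝ) (v : V),
      p' t v = -lam * p t v + lam * ∫ u, T v u * p (t - K v u) u ∂μ) :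
    ∀ t₁ t₂ : ℝ,
      (∫ v, p t₁ v ∂μ)
        + lam * ∫ v, (∫ u, T v u * (∫ s in (t₁ - K v u)..t₁, p s u) ∂μ) ∂μ
      = (∫ v, p t₂ v ∂μ)
        + lam * ∫ v, (∫ u, T v u * (∫ s in (t₂ - K v u)..t₂, p s u) ∂μ) ∂μ := by
  classical
  obtain ⟨C₀, hC₀⟩ := hp_bdd
  set C := max C₀ 0 with hCdef
  have hC0 : (0:ℝ) ≤ C := le_max_right _ _
  have hpC : ∀ t v, |p t v| ≤ C := fun t v => (hC₀ t v).trans (le_max_left _ _)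
  obtain ⟨CK₀, hCK₀⟩ := hK_bdd
  set CK := max CK₀ 0 with hCKdef
  have hCK0 : (0:ℝ) ≤ CK := le_max_right _ _
  have hKC : ∀ v u, K v u ≤ CK := fun v u => (hCK₀ v u).trans (le_max_left _ _)
  -- slice measurability
  have hKm : ∀ v, Measurable fun u => K v u := fun v => hK_meas.comp measurable_prodMk_left
  have hTmv : ∀ v, Measurable fun u => T v u := fun v => hT_meas.comp measurable_prodMk_left
  have hpmt : ∀ t, Measurable fun v => p t v := fun t => hp_meas.comp measurable_prodMk_left
  have hcontp : ∀ v, Continuous fun s => p s v := fun v =>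
    continuous_iff_continuousAt.2 fun s => (hp_deriv s v).continuousAt
  have hpint : ∀ t, Integrable (fun v => p t v) μ := fun t =>
    bdd_integrable (hpmt t).aestronglyMeasurable (fun v => hpC t v)
  -- T(·,u) is integrable for every u since its integral is 1
  have hTu_int : ∀ u, Integrable (fun v => T v u) μ := by
    intro u
    by_contra h
    have h1 := hT_prob u
    rw [integral_undef h] at h1
    norm_num at h1
  -- T is integrable on the product
  have hT_prod : Integrable (fun q : V × V => T q.1 q.2) (μ.prod μ) := by
    have hsw : Integrable (fun q : V × V => T q.2 q.1) (μ.prod μ) := by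
      have hm : AEStronglyMeasurable (fun q : V × V => T q.2 q.1) (μ.prod μ) :=
        (hT_meas.comp measurable_swap).aestronglyMeasurable
      rw [integrable_prod_iff hm]
      constructor
      · exact Filter.Eventually.of_forall fun u => hTu_int u
      · have heq1 : (fun u => ∫ v, ‖T v u‖ ∂μ) = fun _ => (1:ℝ) := by
          funext u
          rw [← hT_prob u]
          congr 1
          funext v
          exact Real.norm_of_nonneg (hT_nonneg v u)
        rw [heq1]
        exact integrable_const 1
    have := hsw.swap
    simpa [Function.comp_def] using this
  have hTv_ae : ∀ᵐ v ∂μ, Integrable (fun u => T v u) μ := hT_prod.prod_right_ae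
  -- product integrability of T times a bounded jointly measurable factor
  have hprod_mul : ∀ (g : V → V → ℝ), Measurable (fun q : V × V => g q.1 q.2) →
      ∀ (B : ℝ), (∀ v u, |g v u| ≤ B) →
      Integrable (fun q : V × V => T q.1 q.2 * g q.1 q.2) (μ.prod μ) := by
    intro g hgm B hgB
    refine Integrable.mono' (hT_prod.const_mul B) (hT_meas.mul hgm).aestronglyMeasurable ?_
    refine Filter.Eventually.of_forall fun q => ?_
    rw [Real.norm_eq_abs, abs_mul, abs_of_nonneg (hT_nonneg _ _)]
    calc T q.1 q.2 * |g q.1 q.2| ≤ T q.1 q.2 * B :=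
          mul_le_mul_of_nonneg_left (hgB _ _) (hT_nonneg _ _)
      _ = B * T q.1 q.2 := mul_comm _ _
  -- reduce to the ordered case
  suffices key : ∀ t₁ t₂ : ℝ, t₁ ≤ t₂ →
      (∫ v, p t₁ v ∂μ)
        + lam * ∫ v, (∫ u, T v u * (∫ s in (t₁ - K v u)..t₁, p s u) ∂μ) ∂μ
      = (∫ v, p t₂ v ∂μ)
        + lam * ∫ v, (∫ u, T v u * (∫ s in (t₂ - K v u)..t₂, p s u) ∂μ) ∂μ by
    intro t₁ t₂
    rcases le_total t₁ t₂ with h | h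
    exacts [key _ _ h, (key _ _ h).symm]
  intro t₁ t₂ h12
  -- joint measurability of the delayed mass integrals
  have hJmeas : ∀ t : ℝ, Measurable fun q : V × V => ∫ s in (t - K q.1 q.2)..t, p s q.2 := by
    intro t
    have hS : MeasurableSet {r : (V × V) × ℝ | t - K r.1.1 r.1.2 < r.2 ∧ r.2 ≤ t} := by
      apply MeasurableSet.inter
      · exact measurableSet_lt (measurable_const.sub (hK_meas.comp measurable_fst)) measurable_snd
      · exact measurableSet_le measurable_snd measurable_const
    have hf : Measurable fun r : (V × V) × ℝ => p r.2 r.1.2 :=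
      hp_meas.comp (measurable_snd.prodMk (measurable_snd.comp measurable_fst))
    have hind := (hf.indicator hS).stronglyMeasurable
    have hsm := hind.integral_prod_right' (ν := (volume : Measure ℝ))
    have heq : (fun q : V × V => ∫ s in (t - K q.1 q.2)..t, p s q.2)
        = fun q : V × V => ∫ s, ({r : (V × V) × ℝ | t - K r.1.1 r.1.2 < r.2 ∧ r.2 ≤ t}.indicator
            (fun r : (V × V) × ℝ => p r.2 r.1.2)) (q, s) ∂(volume : Measure ℝ) := by
      funext q
      rw [intervalIntegral.integral_of_le (by linarith [hK_nonneg q.1 q.2] : t - K q.1 q.2 ≤ t),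
        ← MeasureTheory.integral_indicator measurableSet_Ioc]
      congr 1
      all_goals funext s
      all_goals simp [Set.indicator_apply, Set.mem_Ioc, Set.mem_setOf_eq]
    rw [heq]
    exact hsm.measurable
  have hcmeas : Measurable fun u : V => ∫ s in t₁..t₂, p s u := by
    have hS : MeasurableSet {r : V × ℝ | t₁ < r.2 ∧ r.2 ≤ t₂} := by
      apply MeasurableSet.inter
      · exact measurableSet_lt measurable_const measurable_snd
      · exact measurableSet_le measurable_snd measurable_const
    have hf : Measurable fun r : V × ℝ => p r.2 r.1 :=
      hp_meas.comp (measurable_snd.prodMk measurable_fst)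
    have hind := (hf.indicator hS).stronglyMeasurable
    have hsm := hind.integral_prod_right' (ν := (volume : Measure ℝ))
    have heq : (fun u : V => ∫ s in t₁..t₂, p s u)
        = fun u : V => ∫ s, ({r : V × ℝ | t₁ < r.2 ∧ r.2 ≤ t₂}.indicator
            (fun r : V × ℝ => p r.2 r.1)) (u, s) ∂(volume : Measure ℝ) := by
      funext u
      rw [intervalIntegral.integral_of_le h12, ← MeasureTheory.integral_indicator measurableSet_Ioc]
      congr 1
      all_goals funext s
      all_goals simp [Set.indicator_apply, Set.mem_Ioc, Set.mem_setOf_eq]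
    rw [heq]
    exact hsm.measurable
  have hdmeas : Measurable fun q : V × V => ∫ s in t₁..t₂, p (s - K q.1 q.2) q.2 := by
    have hS : MeasurableSet {r : (V × V) × ℝ | t₁ < r.2 ∧ r.2 ≤ t₂} := by
      apply MeasurableSet.inter
      · exact measurableSet_lt measurable_const measurable_snd
      · exact measurableSet_le measurable_snd measurable_const
    have hf : Measurable fun r : (V × V) × ℝ => p (r.2 - K r.1.1 r.1.2) r.1.2 :=
      hp_meas.comp ((measurable_snd.sub (hK_meas.comp measurable_fst)).prodMk
        (measurable_snd.comp measurable_fst))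
    have hind := (hf.indicator hS).stronglyMeasurable
    have hsm := hind.integral_prod_right' (ν := (volume : Measure ℝ))
    have heq : (fun q : V × V => ∫ s in t₁..t₂, p (s - K q.1 q.2) q.2)
        = fun q : V × V => ∫ s, ({r : (V × V) × ℝ | t₁ < r.2 ∧ r.2 ≤ t₂}.indicator
            (fun r : (V × V) × ℝ => p (r.2 - K r.1.1 r.1.2) r.1.2)) (q, s) ∂(volume : Measure ℝ) := by
      funext q
      rw [intervalIntegral.integral_of_le h12, ← MeasureTheory.integral_indicator measurableSet_Ioc]
      congr 1
      all_goals funext s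
      all_goals simp [Set.indicator_apply, Set.mem_Ioc, Set.mem_setOf_eq]
    rw [heq]
    exact hsm.measurable
  -- bounds
  have hJbdd : ∀ (t : ℝ) (v u : V), |∫ s in (t - K v u)..t, p s u| ≤ C * CK := by
    intro t v u
    have hb := intervalIntegral.norm_integral_le_of_norm_le_const
      (C := C) (f := fun s => p s u) (a := t - K v u) (b := t)
      (fun x _ => by simpa [Real.norm_eq_abs] using hpC x u)
    rw [Real.norm_eq_abs] at hb
    have h1 : |t - (t - K v u)| = K v u := by
      rw [show t - (t - K v u) = K v u by ring, abs_of_nonneg (hK_nonneg v u)]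
    rw [h1] at hb
    exact hb.trans (mul_le_mul_of_nonneg_left (hKC v u) hC0)
  have hcbdd : ∀ u, |∫ s in t₁..t₂, p s u| ≤ C * |t₂ - t₁| := by
    intro u
    have hb := intervalIntegral.norm_integral_le_of_norm_le_const
      (C := C) (f := fun s => p s u) (a := t₁) (b := t₂)
      (fun x _ => by simpa [Real.norm_eq_abs] using hpC x u)
    rw [Real.norm_eq_abs] at hb
    exact hb
  have hdbdd : ∀ v u, |∫ s in t₁..t₂, p (s - K v u) u| ≤ C * |t₂ - t₁| := by
    intro v u
    have hb := intervalIntegral.norm_integral_le_of_norm_le_const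
      (C := C) (f := fun s => p (s - K v u) u) (a := t₁) (b := t₂)
      (fun x _ => by simpa [Real.norm_eq_abs] using hpC (x - K v u) u)
    rw [Real.norm_eq_abs] at hb
    exact hb
  -- integrabilities over v
  have hcmeas2 : Measurable fun q : V × V => ∫ s in t₁..t₂, p s q.2 := by
    have h := hcmeas.comp ((measurable_snd : Measurable fun q : V × V => q.2))
    simpa [Function.comp_def] using h
  have hRint : ∀ t : ℝ, Integrable
      (fun v => ∫ u, T v u * (∫ s in (t - K v u)..t, p s u) ∂μ) μ := by
    intro t
    have h := (hprod_mul _ (hJmeas t) (C * CK) (hJbdd t)).integral_prod_left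
    simpa using h
  have hTcint : Integrable (fun v => ∫ u, T v u * (∫ s in t₁..t₂, p s u) ∂μ) μ := by
    have h := (hprod_mul (fun _ u => ∫ s in t₁..t₂, p s u) hcmeas2
      (C * |t₂ - t₁|) (fun _ u => hcbdd u)).integral_prod_left
    simpa using h
  have hccint : Integrable (fun v => ∫ s in t₁..t₂, p s v) μ :=
    bdd_integrable hcmeas.aestronglyMeasurable hcbdd
  -- interval shifting identity
  have hstepC : ∀ v u, (∫ s in (t₂ - K v u)..t₂, p s u)
      = (∫ s in (t₁ - K v u)..t₁, p s u) + (∫ s in t₁..t₂, p s u)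
        - (∫ s in t₁..t₂, p (s - K v u) u) := by
    intro v u
    set k := K v u with hk
    have hii : ∀ a b : ℝ, IntervalIntegrable (fun s => p s u) volume a b :=
      fun a b => (hcontp u).intervalIntegrable a b
    have h1 := intervalIntegral.integral_add_adjacent_intervals (hii (t₁ - k) t₁) (hii t₁ t₂)
    have h2 := intervalIntegral.integral_add_adjacent_intervals
      (hii (t₁ - k) (t₂ - k)) (hii (t₂ - k) t₂)
    have h3 : (∫ s in t₁..t₂, p (s - k) u) = ∫ s in (t₁ - k)..(t₂ - k), p s u := by
      simpa using intervalIntegral.integral_comp_sub_right (fun s => p s u) k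
    rw [h3]
    linarith [h1, h2]
  -- the pointwise (a.e. in v) key identity
  have hkey : ∀ᵐ v ∂μ,
      p t₂ v + lam * ∫ u, T v u * (∫ s in (t₂ - K v u)..t₂, p s u) ∂μ
      = p t₁ v + lam * (∫ u, T v u * (∫ s in (t₁ - K v u)..t₁, p s u) ∂μ)
        + lam * ((∫ u, T v u * (∫ s in t₁..t₂, p s u) ∂μ) - (∫ s in t₁..t₂, p s v)) := by
    filter_upwards [hTv_ae] with v hTv
    have hFTC : (∫ s in t₁..t₂, p' s v) = p t₂ v - p t₁ v :=
      intervalIntegral.integral_eq_sub_of_hasDerivAt (fun s _ => hp_deriv s v)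
        ((hp'_cont v).intervalIntegrable t₁ t₂)
    have hFvm : Measurable fun r : ℝ × V => T v r.2 * p (r.1 - K v r.2) r.2 :=
      ((hTmv v).comp measurable_snd).mul
        (hp_meas.comp ((measurable_fst.sub ((hKm v).comp measurable_snd)).prodMk measurable_snd))
    have hhm : StronglyMeasurable fun s => ∫ u, T v u * p (s - K v u) u ∂μ := by
      have h := hFvm.stronglyMeasurable.integral_prod_right' (ν := μ)
      simpa using h
    have hhb : ∀ s, |∫ u, T v u * p (s - K v u) u ∂μ| ≤ C * ∫ u, T v u ∂μ := by
      intro s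
      calc |∫ u, T v u * p (s - K v u) u ∂μ|
            = ‖∫ u, T v u * p (s - K v u) u ∂μ‖ := (Real.norm_eq_abs _).symm
        _ ≤ ∫ u, ‖T v u * p (s - K v u) u‖ ∂μ := norm_integral_le_integral_norm _
        _ ≤ ∫ u, C * T v u ∂μ := by
            refine integral_mono_of_nonneg
              (Filter.Eventually.of_forall fun u => norm_nonneg _) (hTv.const_mul C)
              (Filter.Eventually.of_forall fun u => ?_)
            show ‖T v u * p (s - K v u) u‖ ≤ C * T v u
            rw [Real.norm_eq_abs, abs_mul, abs_of_nonneg (hT_nonneg v u)]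
            calc T v u * |p (s - K v u) u| ≤ T v u * C :=
                  mul_le_mul_of_nonneg_left (hpC _ _) (hT_nonneg v u)
              _ = C * T v u := mul_comm _ _
        _ = C * ∫ u, T v u ∂μ := integral_const_mul C _
    have hhii : IntervalIntegrable (fun s => ∫ u, T v u * p (s - K v u) u ∂μ) volume t₁ t₂ :=
      bdd_intervalIntegrable hhm.aestronglyMeasurable hhb t₁ t₂
    have hsplit : (∫ s in t₁..t₂, p' s v)
        = -lam * (∫ s in t₁..t₂, p s v)
          + lam * ∫ s in t₁..t₂, (∫ u, T v u * p (s - K v u) u ∂μ) := by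
      have hfun : (fun s => p' s v) = fun s =>
          -lam * p s v + lam * (∫ u, T v u * p (s - K v u) u ∂μ) := funext fun s => hpde s v
      rw [hfun, intervalIntegral.integral_add (f := fun s => -lam * p s v)
          ((continuous_const.mul (hcontp v)).intervalIntegrable _ _) (hhii.const_mul lam),
        intervalIntegral.integral_const_mul, intervalIntegral.integral_const_mul]
    have hswapv : (∫ s in t₁..t₂, (∫ u, T v u * p (s - K v u) u ∂μ))
        = ∫ u, T v u * (∫ s in t₁..t₂, p (s - K v u) u) ∂μ := by
      haveI : IsFiniteMeasure ((volume : Measure ℝ).restrict (Set.Ioc t₁ t₂)) := by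
        constructor
        rw [Measure.restrict_apply_univ, Real.volume_Ioc]
        exact ENNReal.ofReal_lt_top
      have hdom : Integrable (fun r : ℝ × V => C * T v r.2)
          (((volume : Measure ℝ).restrict (Set.Ioc t₁ t₂)).prod μ) := by
        have hm2 : AEStronglyMeasurable (fun r : ℝ × V => C * T v r.2)
            (((volume : Measure ℝ).restrict (Set.Ioc t₁ t₂)).prod μ) :=
          (((hTmv v).comp measurable_snd).const_mul C).aestronglyMeasurable
        rw [integrable_prod_iff hm2]
        refine ⟨Filter.Eventually.of_forall fun s => hTv.const_mul C, ?_⟩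
        simpa using integrable_const (c := ∫ y, ‖C * T v y‖ ∂μ)
          (μ := (volume : Measure ℝ).restrict (Set.Ioc t₁ t₂))
      have hint0 : Integrable (fun r : ℝ × V => T v r.2 * p (r.1 - K v r.2) r.2)
          (((volume : Measure ℝ).restrict (Set.Ioc t₁ t₂)).prod μ) := by
        refine Integrable.mono' hdom hFvm.aestronglyMeasurable
          (Filter.Eventually.of_forall fun r => ?_)
        rw [Real.norm_eq_abs, abs_mul, abs_of_nonneg (hT_nonneg v r.2)]
        calc T v r.2 * |p (r.1 - K v r.2) r.2| ≤ T v r.2 * C :=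
              mul_le_mul_of_nonneg_left (hpC _ _) (hT_nonneg v r.2)
          _ = C * T v r.2 := mul_comm _ _
      have hint : Integrable (Function.uncurry fun s u => T v u * p (s - K v u) u)
          (((volume : Measure ℝ).restrict (Set.Ioc t₁ t₂)).prod μ) := by
        simpa [Function.uncurry_def] using hint0
      rw [intervalIntegral.integral_of_le h12, MeasureTheory.integral_integral_swap hint]
      congr 1
      funext u
      rw [MeasureTheory.integral_const_mul, intervalIntegral.integral_of_le h12]
    have hmain : p t₂ v - p t₁ v
        = -lam * (∫ s in t₁..t₂, p s v)
          + lam * ∫ u, T v u * (∫ s in t₁..t₂, p (s - K v u) u) ∂μ := by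
      rw [← hFTC, hsplit, hswapv]
    have hTint_of : ∀ (g : V → ℝ), Measurable g → ∀ (B : ℝ), (∀ u, |g u| ≤ B) →
        Integrable (fun u => T v u * g u) μ := by
      intro g hg B hB
      refine Integrable.mono' (hTv.const_mul B) ((hTmv v).mul hg).aestronglyMeasurable
        (Filter.Eventually.of_forall fun u => ?_)
      rw [Real.norm_eq_abs, abs_mul, abs_of_nonneg (hT_nonneg v u)]
      calc T v u * |g u| ≤ T v u * B := mul_le_mul_of_nonneg_left (hB u) (hT_nonneg v u)
        _ = B * T v u := mul_comm _ _
    have hJm1 : Measurable fun u => ∫ s in (t₁ - K v u)..t₁, p s u := by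
      have h := (hJmeas t₁).comp (measurable_prodMk_left (x := v))
      simpa [Function.comp_def] using h
    have hdm1 : Measurable fun u => ∫ s in t₁..t₂, p (s - K v u) u := by
      have h := hdmeas.comp (measurable_prodMk_left (x := v))
      simpa [Function.comp_def] using h
    have hJ1int : Integrable (fun u => T v u * (∫ s in (t₁ - K v u)..t₁, p s u)) μ :=
      hTint_of _ hJm1 (C * CK) (fun u => hJbdd t₁ v u)
    have hcint : Integrable (fun u => T v u * (∫ s in t₁..t₂, p s u)) μ :=
      hTint_of _ hcmeas (C * |t₂ - t₁|) hcbdd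
    have hdint : Integrable (fun u => T v u * (∫ s in t₁..t₂, p (s - K v u) u)) μ :=
      hTint_of _ hdm1 (C * |t₂ - t₁|) (fun u => hdbdd v u)
    have hJ2split : (∫ u, T v u * (∫ s in (t₂ - K v u)..t₂, p s u) ∂μ)
        = (∫ u, T v u * (∫ s in (t₁ - K v u)..t₁, p s u) ∂μ)
          + (∫ u, T v u * (∫ s in t₁..t₂, p s u) ∂μ)
          - (∫ u, T v u * (∫ s in t₁..t₂, p (s - K v u) u) ∂μ) := by
      have hadd : Integrable (fun u => T v u * (∫ s in (t₁ - K v u)..t₁, p s u)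
          + T v u * (∫ s in t₁..t₂, p s u)) μ := hJ1int.add hcint
      have e0 : (∫ u, T v u * (∫ s in (t₂ - K v u)..t₂, p s u) ∂μ)
          = ∫ u, (T v u * (∫ s in (t₁ - K v u)..t₁, p s u)
              + T v u * (∫ s in t₁..t₂, p s u)
              - T v u * (∫ s in t₁..t₂, p (s - K v u) u)) ∂μ :=
        integral_congr_ae (Filter.Eventually.of_forall fun u => by
          show T v u * (∫ s in (t₂ - K v u)..t₂, p s u)
              = T v u * (∫ s in (t₁ - K v u)..t₁, p s u)
                + T v u * (∫ s in t₁..t₂, p s u)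
                - T v u * (∫ s in t₁..t₂, p (s - K v u) u)
          rw [hstepC v u]; ring)
      rw [e0, integral_sub hadd hdint, integral_add hJ1int hcint]
    linear_combination hmain + lam * hJ2split
  -- integrate the key identity over v
  have hEq := integral_congr_ae hkey
  have hR1L : Integrable (fun v => lam * ∫ u, T v u * (∫ s in (t₁ - K v u)..t₁, p s u) ∂μ) μ :=
    (hRint t₁).const_mul lam
  have hR2L : Integrable (fun v => lam * ∫ u, T v u * (∫ s in (t₂ - K v u)..t₂, p s u) ∂μ) μ :=
    (hRint t₂).const_mul lam
  have hsum1 : Integrable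
      (fun v => p t₁ v + lam * ∫ u, T v u * (∫ s in (t₁ - K v u)..t₁, p s u) ∂μ) μ :=
    (hpint t₁).add hR1L
  have hTc_cc : Integrable (fun v => (∫ u, T v u * (∫ s in t₁..t₂, p s u) ∂μ)
      - (∫ s in t₁..t₂, p s v)) μ := hTcint.sub hccint
  have hlast : Integrable (fun v => lam * ((∫ u, T v u * (∫ s in t₁..t₂, p s u) ∂μ)
      - (∫ s in t₁..t₂, p s v))) μ := hTc_cc.const_mul lam
  rw [integral_add (hpint t₂) hR2L, MeasureTheory.integral_const_mul,
    integral_add hsum1 hlast,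
    integral_add (hpint t₁) hR1L,
    MeasureTheory.integral_const_mul, MeasureTheory.integral_const_mul,
    integral_sub hTcint hccint] at hEq
  have hcancel : (∫ v, (∫ u, T v u * (∫ s in t₁..t₂, p s u) ∂μ) ∂μ)
      = ∫ v, (∫ s in t₁..t₂, p s v) ∂μ := by
    have hint : Integrable (fun q : V × V => T q.1 q.2 * (∫ s in t₁..t₂, p s q.2)) (μ.prod μ) :=
      hprod_mul (fun _ u => ∫ s in t₁..t₂, p s u) hcmeas2
        (C * |t₂ - t₁|) (fun _ u => hcbdd u)
    rw [MeasureTheory.integral_integral_swap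
      (f := fun v u => T v u * (∫ s in t₁..t₂, p s u)) hint]
    congr 1
    funext u
    rw [MeasureTheory.integral_mul_const, hT_prob u, one_mul]
  rw [hcancel, sub_self, mul_zero, add_zero] at hEq
  exact hEq.symm
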